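/- arXiv:2604.00335 — 15 statements merged into one kernel-verified Lean document; each statement's English description precedes it below -/
import Mathlib

section
/- Let G be a finite group, let O be a transfer system on G, and let M be the maximal compatible transfer system of O. Then a transfer K → H ∈ O belongs to M if and only if the pair (O, T({K → H})) is compatible, where T({K → H}) is the transfer system generated by the single relation K → H. -/
/-- A transfer system on a group `G`: a binary relation on subgroups refining
inclusion, which is reflexive, closed under conjugation, restriction, and
composition. -/
structure TransferSystem (G : Type*) [Group G] where
  rel : Subgroup G → Subgroup G → Prop
  le_of_rel : ∀ {K H : Subgroup G}, rel K H → K ≤ H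
  refl : ∀ H : Subgroup G, rel H H
  conj : ∀ {K H : Subgroup G} (g : G), rel K H →
    rel (K.map (MulAut.conj g).toMonoidHom) (H.map (MulAut.conj g).toMonoidHom)
  restrict : ∀ {K H : Subgroup G} (L : Subgroup G), rel K H → L ≤ H → rel (K ⊓ L) L
  comp : ∀ {L K H : Subgroup G}, rel L K → rel K H → rel L H

/-- The pair `(Oa, Om)` of transfer systems is compatible. -/
def TransferSystem.Compatible {G : Type*} [Group G] (Oa Om : TransferSystem G) : Prop :=
  (∀ K H : Subgroup G, Om.rel K H → Oa.rel K H) ∧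
  ∀ K J H : Subgroup G, J ≤ H → Om.rel K H → Oa.rel (K ⊓ J) K → Oa.rel J H

/-- `M` is the maximal compatible transfer system of `O`. -/
def TransferSystem.IsMaxCompatible {G : Type*} [Group G] (O M : TransferSystem G) : Prop :=
  O.Compatible M ∧
  ∀ Om : TransferSystem G, O.Compatible Om → ∀ K H : Subgroup G, Om.rel K H → M.rel K H

/-- `T` is the transfer system generated by the binary relation `B`, i.e. the
smallest transfer system containing `B`. -/
def TransferSystem.IsGeneratedBy {G : Type*} [Group G] (T : TransferSystem G)
    (B : Subgroup G → Subgroup G → Prop) : Prop :=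
  (∀ K H : Subgroup G, B K H → T.rel K H) ∧
  ∀ T' : TransferSystem G, (∀ K H : Subgroup G, B K H → T'.rel K H) →
    ∀ K H : Subgroup G, T.rel K H → T'.rel K H

/-- The single transfer `K → H` is compatible with `Oa`. -/
def TransferSystem.EdgeCompatible {G : Type*} [Group G] (Oa : TransferSystem G)
    (K H : Subgroup G) : Prop :=
  ∀ J : Subgroup G, J ≤ H → Oa.rel (K ⊓ J) K → Oa.rel J H

/-- A transfer system is saturated. -/
def TransferSystem.Saturated {G : Type*} [Group G] (O : TransferSystem G) : Prop :=
  ∀ L K H : Subgroup G, L ≤ K → K ≤ H → O.rel L H → O.rel K H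

/-- A transfer system is disklike: every transfer is a restriction of a
transfer to the full group. -/
def TransferSystem.Disklike {G : Type*} [Group G] (O : TransferSystem G) : Prop :=
  ∀ K H : Subgroup G, O.rel K H → ∃ L : Subgroup G, O.rel L ⊤ ∧ K = L ⊓ H

/-- `r` is a proper restriction of `e` in the restriction order on transfers,
viewed as pairs of subgroups. -/
def RestrLt {G : Type*} [Group G] (r e : Subgroup G × Subgroup G) : Prop :=
  ∃ I : Subgroup G, I < e.2 ∧ r = (e.1 ⊓ I, I)

/-- `r ≺ e`: `r` is covered by `e` in the restriction order on transfers of `O`. -/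
def RestrCovBy {G : Type*} [Group G] (O : TransferSystem G)
    (r e : Subgroup G × Subgroup G) : Prop :=
  RestrLt r e ∧
    ¬ ∃ q : Subgroup G × Subgroup G, O.rel q.1 q.2 ∧ RestrLt r q ∧ RestrLt q e

/-- The binary relation `p⁻¹O` on subgroups of `G`, for `O` a transfer system
on `G ⧸ N`. -/
def preimageRel {G : Type*} [Group G] (N : Subgroup G) [N.Normal]
    (O : TransferSystem (G ⧸ N)) : Subgroup G → Subgroup G → Prop :=
  fun A B => ∃ K H : Subgroup (G ⧸ N), O.rel K H ∧
    A = Subgroup.comap (QuotientGroup.mk' N) K ∧ B = Subgroup.comap (QuotientGroup.mk' N) H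

/-- A transfer `K → H ∈ O` belongs to the maximal compatible
transfer system `M` of `O` if and only if `(O, T({K → H}))` is compatible. -/
theorem stmt_0 {G : Type*} [Group G] [Finite G] (O M T : TransferSystem G)
    (hM : O.IsMaxCompatible M) (K H : Subgroup G) (hKH : O.rel K H)
    (hT : T.IsGeneratedBy (fun A B => A = K ∧ B = H)) :
    M.rel K H ↔ O.Compatible T := by
  constructor
  · intro hMKH
    have hTM : ∀ A B : Subgroup G, T.rel A B → M.rel A B := by
      apply hT.2
      rintro A B ⟨rfl, rfl⟩
      exact hMKH
    exact ⟨fun A B h => hM.1.1 A B (hTM A B h),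
      fun A J B hJB h h' => hM.1.2 A J B hJB (hTM A B h) h'⟩
  · intro hcomp
    exact hM.2 T hcomp K H (hT.1 K H ⟨rfl, rfl⟩)
end

section
/- Let G be a finite group and O_a a transfer system on G. Given transfers I → K ∈ O_a and K → H ∈ O_a, if both I → K and K → H are compatible with O_a, then the composite transfer I → H (which lies in O_a) is also compatible with O_a. -/
/-- if transfers `I → K` and `K → H` of `Oa` are both compatible
with `Oa`, then so is the composite transfer `I → H`. -/
theorem stmt_2 {G : Type*} [Group G] [Finite G] (Oa : TransferSystem G)
    (I K H : Subgroup G) (hIK : Oa.rel I K) (hKH : Oa.rel K H)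
    (hcIK : Oa.EdgeCompatible I K) (hcKH : Oa.EdgeCompatible K H) :
    Oa.EdgeCompatible I H := by
  intro J hJ h
  have heq : I ⊓ (K ⊓ J) = I ⊓ J := by
    rw [← inf_assoc, inf_of_le_left (Oa.le_of_rel hIK)]
  exact hcKH J hJ (hcIK (K ⊓ J) inf_le_left (by rwa [heq]))
end

section
/- Let G be a finite group, O_a a transfer system on G, and B a binary relation on the subgroups of G refining inclusion. Then the pair (O_a, T(B)) is compatible if and only if every element of Res(B) := { (K ∩ J) → J : K → H ∈ B and J ≤ H } lies in O_a and is compatible with O_a. -/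
section Aux

variable {G : Type*} [Group G]

private lemma cmap_cmap_inv (g : G) (A : Subgroup G) :
    (A.map (MulAut.conj g).toMonoidHom).map (MulAut.conj g⁻¹).toMonoidHom = A := by
  rw [Subgroup.map_map]
  convert Subgroup.map_id A
  ext x
  simp
  group

private lemma cmap_inf (g : G) (A B : Subgroup G) :
    (A ⊓ B).map (MulAut.conj g).toMonoidHom
      = A.map (MulAut.conj g).toMonoidHom ⊓ B.map (MulAut.conj g).toMonoidHom :=
  Subgroup.map_inf A B _ (MulAut.conj g).injective

/-- The transfer system of edges all of whose restrictions lie in `Oa` and are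
compatible with `Oa`. -/
private def resSystem (Oa : TransferSystem G) : TransferSystem G where
  rel K H := K ≤ H ∧ ∀ J : Subgroup G, J ≤ H →
    Oa.rel (K ⊓ J) J ∧ Oa.EdgeCompatible (K ⊓ J) J
  le_of_rel h := h.1
  refl H := ⟨le_rfl, fun J hJ => by
    rw [inf_eq_right.mpr hJ]
    exact ⟨Oa.refl J, fun J' hJ' h => by rwa [inf_eq_right.mpr hJ'] at h⟩⟩
  conj {K H} g h := by
    refine ⟨Subgroup.map_mono h.1, fun J hJ => ?_⟩
    set f := (MulAut.conj g).toMonoidHom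
    set f' := (MulAut.conj g⁻¹).toMonoidHom
    set J₀ := J.map f' with hJ₀def
    have hJ₀ : J₀ ≤ H := by
      have := Subgroup.map_mono (f := f') hJ
      rwa [cmap_cmap_inv g H] at this
    have hJmap : J₀.map f = J := by
      have := cmap_cmap_inv g⁻¹ J
      rwa [inv_inv] at this
    obtain ⟨h1, h2⟩ := h.2 J₀ hJ₀
    have hmain : Oa.rel (K.map f ⊓ J) J := by
      have := Oa.conj g h1
      rwa [cmap_inf, hJmap] at this
    refine ⟨hmain, fun J' hJ' hrel => ?_⟩
    set J'₀ := J'.map f' with hJ'₀def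
    have hJ'₀ : J'₀ ≤ J₀ := Subgroup.map_mono hJ'
    have hJ'map : J'₀.map f = J' := by
      have := cmap_cmap_inv g⁻¹ J'
      rwa [inv_inv] at this
    have hback : Oa.rel ((K ⊓ J₀) ⊓ J'₀) (K ⊓ J₀) := by
      have := Oa.conj g⁻¹ hrel
      rwa [cmap_inf, cmap_inf, cmap_cmap_inv g K] at this
    have := Oa.conj g (h2 J'₀ hJ'₀ hback)
    rwa [hJmap, hJ'map] at this
  restrict {K H} L h hL := by
    refine ⟨inf_le_right, fun J hJ => ?_⟩
    rw [inf_assoc, inf_eq_right.mpr hJ]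
    exact h.2 J (hJ.trans hL)
  comp {L K H} hLK hKH := by
    refine ⟨hLK.1.trans hKH.1, fun J hJ => ?_⟩
    obtain ⟨hK1, hK2⟩ := hKH.2 J hJ
    obtain ⟨hL1, hL2⟩ := hLK.2 (K ⊓ J) inf_le_left
    have e1 : L ⊓ (K ⊓ J) = L ⊓ J := by rw [← inf_assoc, inf_eq_left.mpr hLK.1]
    rw [e1] at hL1 hL2
    refine ⟨Oa.comp hL1 hK1, fun J' hJ' h' => ?_⟩
    have e2 : (L ⊓ J) ⊓ J' = L ⊓ J' := by rw [inf_assoc, inf_eq_right.mpr hJ']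
    have e3 : (L ⊓ J) ⊓ (K ⊓ J') = L ⊓ J' := by
      rw [inf_inf_inf_comm, inf_eq_left.mpr hLK.1, inf_eq_right.mpr hJ']
    have step : Oa.rel ((K ⊓ J) ⊓ J') (K ⊓ J) := by
      have := hL2 (K ⊓ J') (inf_le_inf_left K hJ') (by rw [e3, ← e2]; exact h')
      rw [inf_assoc, inf_eq_right.mpr hJ']
      exact this
    exact hK2 J' hJ' step
  
end Aux

/-- `(Oa, T(B))` is compatible iff every element of
`Res(B) = {(K ∩ J) → J : K → H ∈ B, J ≤ H}` lies in `Oa` and is compatible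
with `Oa`. -/
theorem stmt_3 {G : Type*} [Group G] [Finite G] (Oa T : TransferSystem G)
    (B : Subgroup G → Subgroup G → Prop) (hB : ∀ K H : Subgroup G, B K H → K ≤ H)
    (hT : T.IsGeneratedBy B) :
    Oa.Compatible T ↔
      ∀ K H J : Subgroup G, B K H → J ≤ H →
        Oa.rel (K ⊓ J) J ∧ Oa.EdgeCompatible (K ⊓ J) J := by
  constructor
  · rintro ⟨h1, h2⟩ K H J hBKH hJ
    have hres : T.rel (K ⊓ J) J := T.restrict J (hT.1 K H hBKH) hJ
    exact ⟨h1 _ _ hres, fun J' hJ' h => h2 (K ⊓ J) J' J hJ' hres h⟩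
  · intro hRes
    have key := hT.2 (resSystem Oa) (fun K H h => ⟨hB K H h, fun J hJ => hRes K H J h hJ⟩)
    constructor
    · intro K H h
      have hK := (key K H h).2 H le_rfl
      rw [inf_eq_left.mpr (key K H h).1] at hK
      exact hK.1
    · intro K J H hJ h hrel
      have hK := (key K H h).2 H le_rfl
      rw [inf_eq_left.mpr (key K H h).1] at hK
      exact hK.2 J hJ hrel
end

section
/- Let G be a finite group, O a transfer system on G, and M the maximal compatible transfer system of O. Then a transfer K → H ∈ O belongs to M if and only if for all subgroups I, J with I a proper subgroup of J and J ≤ H, whenever (K ∩ I) → (K ∩ J) ∈ O, also I → J ∈ O. -/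
namespace TransferSystem

variable {G : Type*} [Group G]

private lemma conj_inj (g : G) : Function.Injective ⇑(MulAut.conj g).toMonoidHom :=
  (MulAut.conj g).injective

private lemma conj_map_conj_inv (g : G) (A : Subgroup G) :
    (A.map (MulAut.conj g).toMonoidHom).map (MulAut.conj g⁻¹).toMonoidHom = A := by
  rw [Subgroup.map_map]
  have : ((MulAut.conj g⁻¹).toMonoidHom.comp (MulAut.conj g).toMonoidHom) = MonoidHom.id G := by
    ext x; simp [mul_assoc]
  rw [this, Subgroup.map_id]

private lemma conj_inv_map_conj (g : G) (A : Subgroup G) :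
    (A.map (MulAut.conj g⁻¹).toMonoidHom).map (MulAut.conj g).toMonoidHom = A := by
  have := conj_map_conj_inv g⁻¹ A
  rwa [inv_inv] at this

/-- The candidate maximal compatible transfer system, defined pointwise. -/
def condTS (O : TransferSystem G) : TransferSystem G where
  rel K H := O.rel K H ∧
    ∀ I J : Subgroup G, I < J → J ≤ H → O.rel (K ⊓ I) (K ⊓ J) → O.rel I J
  le_of_rel h := O.le_of_rel h.1
  refl H := ⟨O.refl H, fun I J hIJ hJH hrel => by
    rwa [inf_eq_right.mpr (hIJ.le.trans hJH), inf_eq_right.mpr hJH] at hrel⟩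
  conj := by
    rintro K H g ⟨h1, h2⟩
    refine ⟨O.conj g h1, fun I J hIJ hJH hrel => ?_⟩
    set f := (MulAut.conj g).toMonoidHom
    set f' := (MulAut.conj g⁻¹).toMonoidHom
    set I' := I.map f'
    set J' := J.map f'
    have hI : I'.map f = I := conj_inv_map_conj g I
    have hJ : J'.map f = J := conj_inv_map_conj g J
    have hI'J' : I' < J' := by
      refine lt_of_le_of_ne (Subgroup.map_mono hIJ.le) fun h => hIJ.ne ?_
      rw [← hI, ← hJ, h]
    have hJ'H : J' ≤ H := by
      have := Subgroup.map_mono (f := f') hJH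
      rwa [conj_map_conj_inv] at this
    have hrel' := O.conj g⁻¹ hrel
    rw [Subgroup.map_inf _ _ _ (conj_inj g⁻¹), Subgroup.map_inf _ _ _ (conj_inj g⁻¹),
      conj_map_conj_inv] at hrel'
    have := O.conj g (h2 I' J' hI'J' hJ'H hrel')
    rwa [hI, hJ] at this
  restrict := by
    rintro A B L ⟨h1, h2⟩ hLB
    refine ⟨O.restrict L h1 hLB, fun I J hIJ hJL hrel => ?_⟩
    rw [inf_assoc, inf_eq_right.mpr (hIJ.le.trans hJL), inf_assoc,
      inf_eq_right.mpr hJL] at hrel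
    exact h2 I J hIJ (hJL.trans hLB) hrel
  comp := by
    rintro L K H ⟨h1, h2⟩ ⟨h3, h4⟩
    refine ⟨O.comp h1 h3, fun I J hIJ hJH hrel => ?_⟩
    have hLK : L ≤ K := O.le_of_rel h1
    have hKIJ : O.rel (K ⊓ I) (K ⊓ J) := by
      rcases eq_or_lt_of_le (inf_le_inf_left K hIJ.le) with heq | hlt
      · rw [heq]; exact O.refl _
      · refine h2 (K ⊓ I) (K ⊓ J) hlt inf_le_left ?_
        rwa [← inf_assoc, ← inf_assoc, inf_eq_left.mpr hLK]
    exact h4 I J hIJ hJH hKIJ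

lemma condTS_compatible (O : TransferSystem G) : O.Compatible O.condTS := by
  refine ⟨fun K H h => h.1, fun A J B hJB hAB hinf => ?_⟩
  rcases eq_or_lt_of_le hJB with rfl | hlt
  · exact O.refl J
  · refine hAB.2 J B hlt le_rfl ?_
    rwa [inf_eq_left.mpr (O.le_of_rel hAB.1)]

end TransferSystem

/-- a transfer `K → H ∈ O` belongs to the maximal compatible
transfer system `M` of `O` iff for all `I < J ≤ H`, whenever
`(K ∩ I) → (K ∩ J) ∈ O`, also `I → J ∈ O`. -/
theorem stmt_4 {G : Type*} [Group G] [Finite G] (O M : TransferSystem G)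
    (hM : O.IsMaxCompatible M) (K H : Subgroup G) (hKH : O.rel K H) :
    M.rel K H ↔
      ∀ I J : Subgroup G, I < J → J ≤ H → O.rel (K ⊓ I) (K ⊓ J) → O.rel I J := by
  constructor
  · intro hm I J hIJ hJH hO
    have hKJ : M.rel (K ⊓ J) J := M.restrict J hm hJH
    refine hM.1.2 (K ⊓ J) I J hIJ.le hKJ ?_
    rwa [inf_assoc, inf_eq_right.mpr hIJ.le]
  · intro hC
    exact hM.2 O.condTS O.condTS_compatible K H ⟨hKH, hC⟩
end

section
/- Let G be a finite group, O a transfer system on G, and M the maximal compatible transfer system of O. If K → H ∈ O and every proper subgroup J < H satisfies J ≤ K (equivalently, every proper restriction of K → H is reflexive), then K → H ∈ M. -/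
namespace Stmt5Aux

variable {G : Type*} [Group G]

abbrev φ (g : G) : G →* G := (MulAut.conj g).toMonoidHom

lemma phi_inj (g : G) : Function.Injective (φ g) := (MulAut.conj g).injective

lemma map_phi_map_phi (c g : G) (A : Subgroup G) :
    (A.map (φ g)).map (φ c) = A.map (φ (c * g)) := by
  rw [Subgroup.map_map]
  congr 1
  ext x
  simp [MulAut.conj, mul_assoc]

lemma map_phi_one (A : Subgroup G) : A.map (φ (1 : G)) = A := by
  ext x
  simp [MulAut.conj]

lemma map_phi_lt {g : G} {A B : Subgroup G} (hAB : A < B) :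
    A.map (φ g) < B.map (φ g) := by
  constructor
  · exact Subgroup.map_mono hAB.le
  · intro hle
    exact hAB.not_ge ((Subgroup.map_le_map_iff_of_injective (phi_inj g)).mp hle)

lemma lt_of_map_phi_lt {g : G} {A B : Subgroup G} (hAB : A.map (φ g) < B.map (φ g)) :
    A < B := by
  have h1 := map_phi_lt (g := g⁻¹) hAB
  rwa [map_phi_map_phi, map_phi_map_phi, inv_mul_cancel, map_phi_one, map_phi_one] at h1


variable (K H : Subgroup G)

/-- single conjugate edge -/
def E (A B : Subgroup G) : Prop := ∃ g : G, A = K.map (φ g) ∧ B = H.map (φ g)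

variable (O : TransferSystem G)

lemma chain_le (hKH : K ≤ H) {A B : Subgroup G}
    (hAB : Relation.ReflTransGen (E K H) A B) : A ≤ B := by
  induction hAB with
  | refl => exact le_refl _
  | tail _ hE ih =>
      obtain ⟨g, rfl, rfl⟩ := hE
      exact le_trans ih (Subgroup.map_mono hKH)

/-- the generated transfer system -/
def genTS (hKH : O.rel K H) (h : ∀ J : Subgroup G, J < H → J ≤ K) : TransferSystem G where
  rel := Relation.ReflTransGen (E K H)
  le_of_rel := fun hAB => chain_le K H (O.le_of_rel hKH) hAB
  refl := fun _ => Relation.ReflTransGen.refl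
  conj := by
    intro A B c hAB
    induction hAB with
    | refl => exact Relation.ReflTransGen.refl
    | tail _ hE ih =>
        obtain ⟨g, rfl, rfl⟩ := hE
        exact ih.tail ⟨c * g, map_phi_map_phi c g K, map_phi_map_phi c g H⟩
  restrict := by
    intro A B L hAB
    induction hAB with
    | refl =>
        intro hL
        rw [inf_of_le_right hL]
    | @tail B' B hAB' hE ih =>
        intro hL
        obtain ⟨g, hB', hB⟩ := hE
        rcases lt_or_eq_of_le hL with hlt | rfl
        · apply ih
          rw [hB']
          rw [hB] at hlt
          have hL1 : L.map (φ g⁻¹) < H.map (φ (g⁻¹ * g)) := by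
            rw [← map_phi_map_phi]; exact map_phi_lt hlt
          rw [inv_mul_cancel, map_phi_one] at hL1
          have := Subgroup.map_mono (f := φ g) (h _ hL1)
          rwa [map_phi_map_phi, mul_inv_cancel, map_phi_one] at this
        · have hAB : Relation.ReflTransGen (E K H) A L := hAB'.tail ⟨g, hB', hB⟩
          rw [inf_of_le_left (chain_le K H (O.le_of_rel hKH) hAB)]
          exact hAB
  comp := fun hLK hKH' => hLK.trans hKH'

lemma genTS_sub (hKH : O.rel K H) (h : ∀ J : Subgroup G, J < H → J ≤ K) :
    ∀ A B : Subgroup G, (genTS K H O hKH h).rel A B → O.rel A B := by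
  intro A B hAB
  induction hAB with
  | refl => exact O.refl _
  | tail _ hE ih =>
      obtain ⟨g, rfl, rfl⟩ := hE
      exact O.comp ih (O.conj g hKH)

lemma ec_edge (hKH : O.rel K H) (h : ∀ J : Subgroup G, J < H → J ≤ K) (g : G) :
    O.EdgeCompatible (K.map (φ g)) (H.map (φ g)) := by
  intro J hJ hrel
  rcases lt_or_eq_of_le hJ with hlt | rfl
  · have hJ0 : J.map (φ g⁻¹) < H := by
      have := map_phi_lt (g := g⁻¹) hlt
      rwa [map_phi_map_phi, inv_mul_cancel, map_phi_one] at this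
    have hJK : J ≤ K.map (φ g) := by
      have := Subgroup.map_mono (f := φ g) (h _ hJ0)
      rwa [map_phi_map_phi, mul_inv_cancel, map_phi_one] at this
    rw [inf_of_le_right hJK] at hrel
    exact O.comp hrel (O.conj g hKH)
  · exact O.refl _

lemma ec_refl (A : Subgroup G) : O.EdgeCompatible A A := by
  intro J hJ hrel
  rwa [inf_of_le_right hJ] at hrel

lemma ec_comp {A B C : Subgroup G} (hAB : A ≤ B) (h1 : O.EdgeCompatible A B)
    (h2 : O.EdgeCompatible B C) : O.EdgeCompatible A C := by
  intro J hJ hrel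
  apply h2 J hJ
  apply h1 (B ⊓ J) inf_le_left
  have : A ⊓ (B ⊓ J) = A ⊓ J := by
    rw [← inf_assoc, inf_of_le_left hAB]
  rwa [this]

lemma genTS_ec (hKH : O.rel K H) (h : ∀ J : Subgroup G, J < H → J ≤ K) :
    ∀ A B : Subgroup G, (genTS K H O hKH h).rel A B → O.EdgeCompatible A B := by
  intro A B hAB
  induction hAB with
  | refl => exact ec_refl O A
  | @tail B' B hAB' hE ih =>
      obtain ⟨g, rfl, rfl⟩ := hE
      exact ec_comp O (chain_le K H (O.le_of_rel hKH) hAB') ih (ec_edge K H O hKH h g)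

end Stmt5Aux

/-- if `K → H ∈ O` and every proper subgroup `J < H` satisfies
`J ≤ K`, then `K → H` is in the maximal compatible transfer system `M` of `O`. -/
theorem stmt_5 {G : Type*} [Group G] [Finite G] (O M : TransferSystem G)
    (hM : O.IsMaxCompatible M) (K H : Subgroup G) (hKH : O.rel K H)
    (h : ∀ J : Subgroup G, J < H → J ≤ K) :
    M.rel K H := by
  set Om := Stmt5Aux.genTS K H O hKH h with hOm
  have hcompat : O.Compatible Om := by
    constructor
    · exact Stmt5Aux.genTS_sub K H O hKH h
    · intro K0 J H0 hJH hOmr hOr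
      exact Stmt5Aux.genTS_ec K H O hKH h K0 H0 hOmr J hJH hOr
  apply hM.2 Om hcompat
  exact Relation.ReflTransGen.single ⟨1, (Stmt5Aux.map_phi_one K).symm, (Stmt5Aux.map_phi_one H).symm⟩
end

section
/- Let G be a finite group, O a transfer system on G, and M the maximal compatible transfer system of O. Then M is saturated. -/
/-- The saturation of a transfer system. -/
def TransferSystem.satClosure {G : Type*} [Group G] (M : TransferSystem G) :
    TransferSystem G where
  rel A B := A ≤ B ∧ ∃ C : Subgroup G, C ≤ A ∧ M.rel C B
  le_of_rel h := h.1
  refl H := ⟨le_rfl, H, le_rfl, M.refl H⟩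
  conj g h := by
    obtain ⟨hAB, C, hCA, hCB⟩ := h
    exact ⟨Subgroup.map_mono hAB, C.map _, Subgroup.map_mono hCA, M.conj g hCB⟩
  restrict L h hLB := by
    obtain ⟨hAB, C, hCA, hCB⟩ := h
    exact ⟨inf_le_right, C ⊓ L, inf_le_inf_right L hCA, M.restrict L hCB hLB⟩
  comp := by
    rintro L K H ⟨hLK, C, hCL, hCK⟩ ⟨hKH, C', hC'K, hC'H⟩
    refine ⟨hLK.trans hKH, C ⊓ C', inf_le_left.trans hCL, ?_⟩
    exact M.comp (M.restrict C' hCK hC'K) hC'H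

/-- the maximal compatible transfer system is always saturated. -/
theorem stmt_7 {G : Type*} [Group G] [Finite G] (O M : TransferSystem G)
    (hM : O.IsMaxCompatible M) :
    M.Saturated := by
  obtain ⟨⟨hsub, hcompat⟩, hmax⟩ := hM
  intro L K H hLK hKH hLH
  -- It suffices to show (O, M.satClosure) is compatible.
  refine hmax M.satClosure ⟨?_, ?_⟩ K H ⟨hKH, L, hLK, hLH⟩
  · rintro A B ⟨hAB, C, hCA, hCB⟩
    -- O.rel A B via compatibility of the edge C → B with J = A
    have h1 : O.rel (C ⊓ A) C := by
      have := O.refl C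
      rwa [inf_eq_left.mpr hCA]
    exact hcompat C A B hAB hCB h1
  · rintro K' J H' hJH' ⟨hK'H', C, hCK', hCH'⟩ hrest
    -- hrest : O.rel (K' ⊓ J) K'
    have h2 : O.rel (C ⊓ J) C := by
      have h3 := O.restrict C hrest hCK'
      have h4 : K' ⊓ J ⊓ C = C ⊓ J := by
        rw [inf_right_comm, inf_comm K' C, inf_eq_left.mpr hCK']
      rwa [h4] at h3
    exact hcompat C J H' hJH' hCH' h2
end

section
/- Let G be a finite group and O a transfer system on G. Then O is saturated if and only if the pair (O, O) is compatible. -/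
/-- a transfer system is saturated iff it is self compatible. -/
theorem stmt_8 {G : Type*} [Group G] [Finite G] (O : TransferSystem G) :
    O.Saturated ↔ O.Compatible O := by
  constructor
  · intro hs
    refine ⟨fun K H h => h, fun K J H hJH hKH hKJ => ?_⟩
    exact hs (K ⊓ J) J H inf_le_right hJH (O.comp hKJ hKH)
  · rintro ⟨-, hc⟩ L K H hLK hKH hLH
    have : O.rel (L ⊓ K) L := by rw [inf_eq_left.mpr hLK]; exact O.refl L
    exact hc L K H hKH hLH this
end

section
/- Let G be a finite group, O a transfer system on G, and M the maximal compatible transfer system of O. If M is disklike, then M = O. -/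
section Aux
variable {G : Type*} [Group G]

lemma conjMap_one' (S : Subgroup G) : S.map (MulAut.conj (1:G)).toMonoidHom = S := by
  have h : (MulAut.conj (1:G)).toMonoidHom = MonoidHom.id G := by
    ext x; simp
  rw [h, Subgroup.map_id]

lemma conjMap_conjMap' (g h : G) (S : Subgroup G) :
    (S.map (MulAut.conj h).toMonoidHom).map (MulAut.conj g).toMonoidHom
      = S.map (MulAut.conj (g*h)).toMonoidHom := by
  rw [Subgroup.map_map]
  congr 1
  ext x
  simp [mul_assoc]

lemma card_conjMap' [Finite G] (g : G) (S : Subgroup G) :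
    Nat.card (S.map (MulAut.conj g).toMonoidHom) = Nat.card S :=
  (Nat.card_congr (S.equivMapOfInjective _ (MulAut.conj g).injective).toEquiv).symm

lemma card_lt_of_lt' [Finite G] {A B : Subgroup G} (h : A < B) :
    Nat.card A < Nat.card B := by
  refine lt_of_le_of_ne (Subgroup.card_le_of_le h.le) fun he => h.ne ?_
  exact Subgroup.eq_of_le_of_card_ge h.le he.ge

lemma conjMap_lt' {A B : Subgroup G} (g : G) (h : A < B) :
    A.map (MulAut.conj g).toMonoidHom < B.map (MulAut.conj g).toMonoidHom :=
  lt_of_le_of_ne (Subgroup.map_mono h.le)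
    (fun he => h.ne (Subgroup.map_injective (MulAut.conj g).injective he))

/-- The key construction: extend `M` by a single `O`-edge and all of its
conjugates, assuming all proper restrictions of conjugates already lie in `M`
and all conjugates are edge-compatible. Maximality then puts the edge in `M`. -/
lemma step' [Finite G] (O M : TransferSystem G) (hM : O.IsMaxCompatible M)
    {K H : Subgroup G} (hKH : O.rel K H) (hlt : K < H)
    (hrestr : ∀ (g : G) (I : Subgroup G), I < H.map (MulAut.conj g).toMonoidHom →
      M.rel (K.map (MulAut.conj g).toMonoidHom ⊓ I) I)
    (hEC : ∀ g : G, O.EdgeCompatible (K.map (MulAut.conj g).toMonoidHom)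
      (H.map (MulAut.conj g).toMonoidHom)) :
    M.rel K H := by
  classical
  set Km : G → Subgroup G := fun g => K.map (MulAut.conj g).toMonoidHom with hKm
  set Hm : G → Subgroup G := fun g => H.map (MulAut.conj g).toMonoidHom with hHm
  have hKmHm : ∀ g, Km g ≤ Hm g := fun g => Subgroup.map_mono hlt.le
  let Om : TransferSystem G :=
  { rel := fun A B => M.rel A B ∨ ∃ g : G, M.rel A (Km g) ∧ M.rel (Hm g) B
    le_of_rel := by
      rintro A B (h | ⟨g, h1, h2⟩)
      · exact M.le_of_rel h
      · exact le_trans (M.le_of_rel h1) (le_trans (hKmHm g) (M.le_of_rel h2))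
    refl := fun A => Or.inl (M.refl A)
    conj := by
      rintro A B g (h | ⟨j, h1, h2⟩)
      · exact Or.inl (M.conj g h)
      · refine Or.inr ⟨g * j, ?_, ?_⟩
        · have := M.conj g h1
          rwa [hKm, conjMap_conjMap'] at this
        · have := M.conj g h2
          rwa [hHm, conjMap_conjMap'] at this
    restrict := by
      rintro A B L (h | ⟨g, h1, h2⟩) hLB
      · exact Or.inl (M.restrict L h hLB)
      · by_cases hc : Hm g ≤ L
        · refine Or.inr ⟨g, ?_, ?_⟩
          · have hAL : A ≤ L := le_trans (M.le_of_rel h1) (le_trans (hKmHm g) hc)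
            rwa [inf_eq_left.mpr hAL]
          · have := M.restrict L h2 hLB
            rwa [inf_eq_left.mpr hc] at this
        · left
          have hI : Hm g ⊓ L < Hm g :=
            lt_of_le_of_ne inf_le_left (fun he => hc (inf_eq_left.mp he))
          have h3 : M.rel (Km g ⊓ (Hm g ⊓ L)) (Hm g ⊓ L) := hrestr g (Hm g ⊓ L) hI
          have e1 : Km g ⊓ (Hm g ⊓ L) = Km g ⊓ L := by
            rw [← inf_assoc, inf_eq_left.mpr (hKmHm g)]
          rw [e1] at h3
          have h4 : M.rel (A ⊓ (Km g ⊓ L)) (Km g ⊓ L) := M.restrict _ h1 inf_le_left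
          have e2 : A ⊓ (Km g ⊓ L) = A ⊓ L := by
            rw [← inf_assoc, inf_eq_left.mpr (M.le_of_rel h1)]
          rw [e2] at h4
          have h5 : M.rel (Hm g ⊓ L) L := M.restrict L h2 hLB
          exact M.comp (M.comp h4 h3) h5
    comp := by
      rintro A B C (h | ⟨g, h1, h2⟩) (h' | ⟨g', h1', h2'⟩)
      · exact Or.inl (M.comp h h')
      · exact Or.inr ⟨g', M.comp h h1', h2'⟩
      · exact Or.inr ⟨g, h1, M.comp h2 h'⟩
      · exfalso
        have hle : Hm g ≤ Km g' := M.le_of_rel (M.comp h2 h1')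
        have hcard : Nat.card (Hm g) ≤ Nat.card (Km g') := Subgroup.card_le_of_le hle
        rw [hKm, hHm, card_conjMap', card_conjMap'] at hcard
        exact absurd hcard (not_le.mpr (card_lt_of_lt' hlt)) }
  have hOmO : ∀ A B : Subgroup G, Om.rel A B → O.rel A B := by
    rintro A B (h | ⟨g, h1, h2⟩)
    · exact hM.1.1 A B h
    · exact O.comp (O.comp (hM.1.1 _ _ h1) (O.conj g hKH)) (hM.1.1 _ _ h2)
  have hcompat : O.Compatible Om := by
    refine ⟨hOmO, ?_⟩
    rintro A J B hJB (h | ⟨g, h1, h2⟩) hpre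
    · exact hM.1.2 A J B hJB h hpre
    · have hAK : A ≤ Km g := M.le_of_rel h1
      have s1 : O.rel (J ⊓ Km g) (Km g) := by
        refine hM.1.2 A (J ⊓ Km g) (Km g) inf_le_right h1 ?_
        have e : A ⊓ (J ⊓ Km g) = A ⊓ J := by
          rw [inf_comm J (Km g), ← inf_assoc, inf_eq_left.mpr hAK]
        rwa [e]
      have s2 : O.rel (J ⊓ Hm g) (Hm g) := by
        refine hEC g (J ⊓ Hm g) inf_le_right ?_
        have e : Km g ⊓ (J ⊓ Hm g) = J ⊓ Km g := by
          rw [inf_comm J (Hm g), ← inf_assoc, inf_eq_left.mpr (hKmHm g), inf_comm]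
        rwa [e]
      refine hM.1.2 (Hm g) J B hJB h2 ?_
      rwa [inf_comm]
  refine hM.2 Om hcompat K H (Or.inr ⟨1, ?_, ?_⟩)
  · rw [hKm]; simp only [conjMap_one']; exact M.refl K
  · rw [hHm]; simp only [conjMap_one']; exact M.refl H

/-- Edge-compatibility of a strict `O`-edge, given the inductive hypothesis
that all `O`-edges with smaller target lie in `M`, and `M` disklike. -/
lemma edgecompat' [Finite G] (O M : TransferSystem G) (hM : O.IsMaxCompatible M)
    (hd : M.Disklike) (n : ℕ)
    (ih : ∀ K H : Subgroup G, Nat.card H ≤ n → O.rel K H → M.rel K H)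
    {K H : Subgroup G} (hKH : O.rel K H) (hlt : K < H) (hcard : Nat.card H ≤ n + 1) :
    O.EdgeCompatible K H := by
  have hsmall : ∀ {C : Subgroup G}, C < H → Nat.card C ≤ n := by
    intro C hC
    have := card_lt_of_lt' hC
    omega
  have sat : ∀ A B C : Subgroup G, Nat.card C ≤ n → O.rel A C → A ≤ B → B ≤ C →
      O.rel B C := by
    intro A B C hc hAC hAB hBC
    refine hM.1.2 A B C hBC (ih A C hc hAC) ?_
    rw [inf_eq_left.mpr hAB]
    exact O.refl A
  intro J hJH hOKJ
  have hm : M.rel (K ⊓ J) K := ih (K ⊓ J) K (hsmall hlt) hOKJ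
  obtain ⟨L, hL, hKJ⟩ := hd _ _ hm
  by_cases hHL : H ≤ L
  · have hKL : L ⊓ K = K := inf_eq_right.mpr (le_trans hlt.le hHL)
    rw [hKL] at hKJ
    have hKJ' : K ≤ J := inf_eq_left.mp hKJ
    by_cases hJH' : J = H
    · subst hJH'; exact O.refl J
    · have hJlt : J < H := lt_of_le_of_ne hJH hJH'
      have hOKJ2 : O.rel K J := by
        have := O.restrict J hKH hJH
        rwa [inf_eq_left.mpr hKJ'] at this
      obtain ⟨L₂, hL₂, hK2⟩ := hd _ _ (ih K J (hsmall hJlt) hOKJ2)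
      refine hM.1.2 (L₂ ⊓ H) J H hJH (M.restrict H hL₂ le_top) ?_
      have h1 : (L₂ ⊓ H) ⊓ J = K := by
        rw [inf_assoc, inf_eq_right.mpr hJH, ← hK2]
      rw [h1]
      have h2 := O.restrict (L₂ ⊓ H) hKH inf_le_right
      have hKle : K ≤ L₂ ⊓ H := le_inf (hK2 ▸ inf_le_left) hlt.le
      rwa [inf_eq_left.mpr hKle] at h2
  · have hLH : L ⊓ H < H :=
      lt_of_le_of_ne inf_le_right (fun he => hHL (inf_eq_right.mp he))
    refine hM.1.2 (L ⊓ H) J H hJH (M.restrict H hL le_top) ?_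
    have hid : (L ⊓ H) ⊓ J = L ⊓ J := by
      rw [inf_assoc, inf_eq_right.mpr hJH]
    rw [hid]
    have h2 := O.restrict (L ⊓ H) hKH inf_le_right
    have hid2 : K ⊓ (L ⊓ H) = K ⊓ J := by
      rw [← inf_assoc, inf_comm K L, ← hKJ, inf_assoc, inf_eq_left.mpr hJH]
    rw [hid2] at h2
    refine sat (K ⊓ J) (L ⊓ J) (L ⊓ H) (hsmall hLH) h2 ?_ (inf_le_inf_left L hJH)
    exact le_inf (hKJ ▸ inf_le_left) inf_le_right

end Aux

/-- if the maximal compatible transfer system `M` of `O` is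
disklike, then `M = O`. -/
theorem stmt_9 {G : Type*} [Group G] [Finite G] (O M : TransferSystem G)
    (hM : O.IsMaxCompatible M) (hd : M.Disklike) :
    M = O := by
  have key : ∀ n (K H : Subgroup G), Nat.card H ≤ n → O.rel K H → M.rel K H := by
    intro n
    induction n with
    | zero =>
      intro K H hc _
      have : 0 < Nat.card H := Nat.card_pos
      omega
    | succ n ih =>
      intro K H hc hKH
      rcases Nat.lt_or_ge (Nat.card H) (n + 1) with h | h
      · exact ih K H (by omega) hKH
      · by_cases heq : K = H
        · subst heq; exact M.refl K
        · have hlt : K < H := lt_of_le_of_ne (O.le_of_rel hKH) heq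
          refine step' O M hM hKH hlt ?_ ?_
          · intro g I hI
            have hOg := O.conj g hKH
            refine ih _ _ ?_ (O.restrict I hOg hI.le)
            have h2 : Nat.card I < Nat.card (H.map (MulAut.conj g).toMonoidHom) :=
              card_lt_of_lt' hI
            rw [card_conjMap'] at h2
            omega
          · intro g
            exact edgecompat' O M hM hd n ih (O.conj g hKH) (conjMap_lt' g hlt)
              (by rw [card_conjMap']; omega)
  have h1 : ∀ K H : Subgroup G, O.rel K H → M.rel K H :=
    fun K H h => key (Nat.card H) K H le_rfl h
  have hrel : M.rel = O.rel :=
    funext fun K => funext fun H => propext ⟨hM.1.1 K H, h1 K H⟩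
  cases M
  cases O
  cases hrel
  rfl
end

section
/- Let G be a finite group and let Tu(G) be the tulip transfer system on G, defined by: K → H ∈ Tu(G) if and only if K ≤ H and either H ≠ G or K = H. Let O be a transfer system on G that contains Tu(G) (i.e., every K ≤ H with H ≠ G satisfies K → H ∈ O) and is not complete (i.e., there exist subgroups K ≤ H with K → H ∉ O). Then Tu(G) is the maximal compatible transfer system of O: the pair (O, Tu(G)) is compatible, and every transfer system O_m with (O, O_m) compatible is contained in Tu(G). -/
/-- if a non-complete transfer system `O` contains the tulip
`Tu(G)`, then `Tu(G)` is the maximal compatible transfer system of `O`. -/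
theorem stmt_10 {G : Type*} [Group G] [Finite G] (Tu O : TransferSystem G)
    (hTu : ∀ K H : Subgroup G, Tu.rel K H ↔ K ≤ H ∧ (H ≠ ⊤ ∨ K = H))
    (hcont : ∀ K H : Subgroup G, K ≤ H → H ≠ ⊤ → O.rel K H)
    (hnc : ∃ K H : Subgroup G, K ≤ H ∧ ¬ O.rel K H) :
    O.IsMaxCompatible Tu := by
  constructor
  · constructor
    · intro K H hKH
      obtain ⟨hle, h⟩ := (hTu K H).mp hKH
      rcases h with h | rfl
      · exact hcont K H hle h
      · exact O.refl K
    · intro K J H hJH hKH hO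
      obtain ⟨hle, h⟩ := (hTu K H).mp hKH
      rcases h with h | rfl
      · exact hcont J H hJH h
      · have : K ⊓ J = J := inf_eq_right.mpr hJH
        rwa [this] at hO
  · intro Om hcomp K H hKH
    rw [hTu]
    refine ⟨Om.le_of_rel hKH, ?_⟩
    by_cases hH : H = ⊤
    · right
      subst hH
      by_contra hK
      obtain ⟨A, B, hAB, hO⟩ := hnc
      apply hO
      have hA : O.rel A ⊤ := by
        refine hcomp.2 K A ⊤ le_top hKH ?_
        exact hcont (K ⊓ A) K inf_le_left hK
      have := O.restrict B hA le_top
      rwa [inf_eq_left.mpr hAB] at this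
    · exact Or.inl hH
end

section
/- Let G be a finite group and O a disklike transfer system on G. Let E be the set of non-reflexive transfers of O, i.e., pairs (K, H) of subgroups with K → H ∈ O and K ≠ H, and let C be the set of cover relations in the restriction order on E, i.e., pairs (r, e) ∈ E × E with r ≺ e. Then the cardinality of E is at most 2·(cardinality of C) + 1. -/
section Aux

variable {G : Type*} [Group G]

lemma restrLt_snd_lt {r e : Subgroup G × Subgroup G} (h : RestrLt r e) :
    r.2 < e.2 := by
  obtain ⟨I, hI, rfl⟩ := h; exact hI

lemma restrLt_trans {r q e : Subgroup G × Subgroup G}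
    (h1 : RestrLt r q) (h2 : RestrLt q e) : RestrLt r e := by
  obtain ⟨J, hJ, rfl⟩ := h1
  obtain ⟨I, hI, rfl⟩ := h2
  refine ⟨J, lt_trans hJ hI, ?_⟩
  have : e.1 ⊓ I ⊓ J = e.1 ⊓ J := by
    rw [inf_assoc, inf_eq_right.mpr hJ.le]
  simp [this]

lemma cardlt [Finite G] {H K : Subgroup G} (h : H < K) :
    Nat.card H < Nat.card K :=
  Set.Finite.card_lt_card (Set.toFinite _)
    (SetLike.lt_iff_le_and_exists.mp h |> fun ⟨h1, x, hx, hnx⟩ =>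
      Set.ssubset_iff_of_subset h1 |>.mpr ⟨x, hx, hnx⟩)

/-- anything strictly above a non-reflexive transfer is non-reflexive -/
lemma nonrefl_up {r q : Subgroup G × Subgroup G}
    (hne : r.1 ≠ r.2) (hlt : RestrLt r q) : q.1 ≠ q.2 := by
  obtain ⟨I, hI, rfl⟩ := hlt
  intro h
  apply hne
  simp only [h] at *
  exact congrArg (· ⊓ I) rfl |>.trans (by simp [inf_eq_right.mpr hI.le])

lemma exists_cov_above [Finite G] (O : TransferSystem G) :
    ∀ n (f e : Subgroup G × Subgroup G), Nat.card f.2 ≤ n →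
    O.rel f.1 f.2 → RestrLt e f →
    ∃ f', O.rel f'.1 f'.2 ∧ RestrCovBy O e f' := by
  intro n
  induction n with
  | zero =>
    intro f e hn _ _
    have := Nat.card_pos (α := f.2)
    omega
  | succ n ih =>
    intro f e hn hrel hlt
    by_cases h : ∃ q : Subgroup G × Subgroup G, O.rel q.1 q.2 ∧ RestrLt e q ∧ RestrLt q f
    · obtain ⟨q, hq1, hq2, hq3⟩ := h
      have := cardlt (restrLt_snd_lt hq3)
      exact ih q e (by omega) hq1 hq2
    · exact ⟨f, hrel, hlt, h⟩

lemma exists_cov_below [Finite G] (O : TransferSystem G) :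
    ∀ n (r e : Subgroup G × Subgroup G), Nat.card e.2 - Nat.card r.2 ≤ n →
    O.rel r.1 r.2 → r.1 ≠ r.2 → RestrLt r e →
    ∃ r', O.rel r'.1 r'.2 ∧ r'.1 ≠ r'.2 ∧ RestrCovBy O r' e := by
  intro n
  induction n with
  | zero =>
    intro r e hn _ _ hlt
    have := cardlt (restrLt_snd_lt hlt)
    omega
  | succ n ih =>
    intro r e hn hrel hne hlt
    by_cases h : ∃ q : Subgroup G × Subgroup G, O.rel q.1 q.2 ∧ RestrLt r q ∧ RestrLt q e
    · obtain ⟨q, hq1, hq2, hq3⟩ := h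
      have h1 := cardlt (restrLt_snd_lt hq2)
      have h2 := cardlt (restrLt_snd_lt hq3)
      exact ih q e (by omega) hq1 (nonrefl_up hne hq2) hq3
    · exact ⟨r, hrel, hne, hlt, h⟩

end Aux


/-- for a disklike transfer system `O`, the number of
non-reflexive transfers is at most twice the number of cover relations of the
restriction order plus one. -/
theorem stmt_12 {G : Type*} [Group G] [Finite G] (O : TransferSystem G)
    (hd : O.Disklike) :
    {p : Subgroup G × Subgroup G | O.rel p.1 p.2 ∧ p.1 ≠ p.2}.ncard ≤
      2 * {c : (Subgroup G × Subgroup G) × (Subgroup G × Subgroup G) |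
            (O.rel c.1.1 c.1.2 ∧ c.1.1 ≠ c.1.2) ∧
            (O.rel c.2.1 c.2.2 ∧ c.2.1 ≠ c.2.2) ∧
            RestrCovBy O c.1 c.2}.ncard + 1 := by
  classical
  set E := {p : Subgroup G × Subgroup G | O.rel p.1 p.2 ∧ p.1 ≠ p.2} with hE
  set C := {c : (Subgroup G × Subgroup G) × (Subgroup G × Subgroup G) |
            (O.rel c.1.1 c.1.2 ∧ c.1.1 ≠ c.1.2) ∧
            (O.rel c.2.1 c.2.2 ∧ c.2.1 ≠ c.2.2) ∧
            RestrCovBy O c.1 c.2} with hC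
  have hCfin : C.Finite := Set.toFinite _
  set A := E ∩ {p : Subgroup G × Subgroup G | p.2 ≠ ⊤} with hA
  set Bg := E ∩ {p : Subgroup G × Subgroup G | p.2 = ⊤ ∧ ∃ I, I < ⊤ ∧ ¬ I ≤ p.1} with hBg
  set Bb := E ∩ {p : Subgroup G × Subgroup G | p.2 = ⊤ ∧ ∀ I, I < ⊤ → I ≤ p.1} with hBb
  -- each element of A admits a cover above it
  have keyA : ∀ e ∈ A, ∃ f, (e, f) ∈ C := by
    rintro e ⟨⟨hrel, hne⟩, htop⟩
    obtain ⟨L, hL, hKL⟩ := hd e.1 e.2 hrel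
    have hlt : RestrLt e (L, ⊤) := ⟨e.2, lt_top_iff_ne_top.mpr htop, by
      simp [hKL, Prod.ext_iff]⟩
    obtain ⟨f', hf1, hf2⟩ := exists_cov_above O (Nat.card (⊤ : Subgroup G)) (L, ⊤) e le_rfl hL hlt
    exact ⟨f', ⟨hrel, hne⟩, ⟨hf1, nonrefl_up hne hf2.1⟩, hf2⟩
  have keyB : ∀ e ∈ Bg, ∃ r, (r, e) ∈ C := by
    rintro e ⟨⟨hrel, hne⟩, htop, I, hI, hIK⟩
    have hrelI : O.rel (e.1 ⊓ I) I := by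
      apply O.restrict I hrel
      rw [htop]; exact le_top
    have hneI : e.1 ⊓ I ≠ I := fun h => hIK (by rw [← h]; exact inf_le_left)
    have hlt : RestrLt (e.1 ⊓ I, I) e := ⟨I, htop ▸ hI, rfl⟩
    obtain ⟨r', h1, h2, h3⟩ := exists_cov_below O (Nat.card e.2) (e.1 ⊓ I, I) e
      (by omega) hrelI hneI hlt
    exact ⟨r', ⟨h1, h2⟩, ⟨hrel, hne⟩, h3⟩
  have hAcard : A.ncard ≤ C.ncard := by
    apply Set.ncard_le_ncard_of_injOn (fun e => (e, if h : e ∈ A then (keyA e h).choose else e))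
    · intro a ha
      simp only [dif_pos ha]
      exact (keyA a ha).choose_spec
    · intro a _ b _ h
      exact (Prod.ext_iff.mp h).1
  have hBgcard : Bg.ncard ≤ C.ncard := by
    apply Set.ncard_le_ncard_of_injOn (fun e => ((if h : e ∈ Bg then (keyB e h).choose else e), e))
    · intro a ha
      simp only [dif_pos ha]
      exact (keyB a ha).choose_spec
    · intro a _ b _ h
      exact (Prod.ext_iff.mp h).2
  have hBbcard : Bb.ncard ≤ 1 := by
    rw [Set.ncard_le_one_iff (Set.toFinite _)]
    rintro a b ⟨⟨_, hane⟩, hatop, ha⟩ ⟨⟨_, hbne⟩, hbtop, hb⟩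
    have ha1 : a.1 < ⊤ := lt_top_iff_ne_top.mpr (fun h => hane (by rw [h, hatop]))
    have hb1 : b.1 < ⊤ := lt_top_iff_ne_top.mpr (fun h => hbne (by rw [h, hbtop]))
    have : a.1 = b.1 := le_antisymm (hb a.1 ha1) (ha b.1 hb1)
    exact Prod.ext this (hatop.trans hbtop.symm)
  have hsub : E ⊆ A ∪ (Bg ∪ Bb) := by
    intro e he
    by_cases htop : e.2 = ⊤
    · by_cases hex : ∃ I, I < ⊤ ∧ ¬ I ≤ e.1
      · exact Or.inr (Or.inl ⟨he, htop, hex⟩)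
      · push_neg at hex
        exact Or.inr (Or.inr ⟨he, htop, hex⟩)
    · exact Or.inl ⟨he, htop⟩
  calc E.ncard ≤ (A ∪ (Bg ∪ Bb)).ncard := Set.ncard_le_ncard hsub (Set.toFinite _)
    _ ≤ A.ncard + (Bg ∪ Bb).ncard := Set.ncard_union_le _ _
    _ ≤ A.ncard + (Bg.ncard + Bb.ncard) := by
        have := Set.ncard_union_le Bg Bb
        omega
    _ ≤ C.ncard + (C.ncard + 1) := by omega
    _ = 2 * C.ncard + 1 := by ring
end

section
/- Let G be a finite group, N a normal subgroup of G, p : G → G/N the quotient map, and O a transfer system on G/N. For subgroups K ≤ H of G, the transfer K → H belongs to the inflation p*O if and only if p(K) → p(H) ∈ O and K = p⁻¹(p(K)) ∩ H (here p(K) denotes the image subgroup of K in G/N and p⁻¹(p(K)) = KN). Equivalently, p*O equals the restriction closure of p⁻¹O: K → H ∈ p*O if and only if there exists a transfer A → B ∈ p⁻¹O with H ≤ B and K = A ∩ H. -/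
lemma map_mk'_conj {G : Type*} [Group G] (N : Subgroup G) [N.Normal] (K : Subgroup G) (g : G) :
    (K.map (MulAut.conj g).toMonoidHom).map (QuotientGroup.mk' N) =
    (K.map (QuotientGroup.mk' N)).map
      (MulAut.conj (QuotientGroup.mk' N g)).toMonoidHom := by
  rw [Subgroup.map_map, Subgroup.map_map]
  congr 1

/-- The candidate inflation transfer system. -/
def inflSys {G : Type*} [Group G] (N : Subgroup G) [N.Normal]
    (O : TransferSystem (G ⧸ N)) : TransferSystem G where
  rel K H := K ≤ H ∧
    O.rel (K.map (QuotientGroup.mk' N)) (H.map (QuotientGroup.mk' N)) ∧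
    ∀ x ∈ H, (QuotientGroup.mk' N x) ∈ K.map (QuotientGroup.mk' N) → x ∈ K
  le_of_rel h := h.1
  refl H := ⟨le_rfl, O.refl _, fun x hx _ => hx⟩
  conj := by
    rintro K H g ⟨hle, hO, hC⟩
    refine ⟨Subgroup.map_mono hle, ?_, ?_⟩
    · rw [map_mk'_conj, map_mk'_conj]
      exact O.conj _ hO
    · rintro x hxH hxK
      rcases hxH with ⟨y, hy, rfl⟩
      rw [map_mk'_conj] at hxK
      rcases hxK with ⟨z, hz, heq⟩
      have h1 : (QuotientGroup.mk' N g) * z * (QuotientGroup.mk' N g)⁻¹ =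
          (QuotientGroup.mk' N g) * (QuotientGroup.mk' N y) * (QuotientGroup.mk' N g)⁻¹ := by
        simpa [MulAut.conj, mul_assoc] using heq
      have h2 : z = QuotientGroup.mk' N y := mul_left_cancel (mul_right_cancel h1)
      have hyK : y ∈ K := hC y hy (h2 ▸ hz)
      exact ⟨y, hyK, rfl⟩
  restrict := by
    rintro K H L ⟨hle, hO, hC⟩ hLH
    have hmap : (K ⊓ L).map (QuotientGroup.mk' N) =
        K.map (QuotientGroup.mk' N) ⊓ L.map (QuotientGroup.mk' N) := by
      apply le_antisymm
      · exact le_inf (Subgroup.map_mono inf_le_left) (Subgroup.map_mono inf_le_right)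
      · rintro z ⟨hzK, hzL⟩
        rcases hzL with ⟨y, hyL, rfl⟩
        have hyK : y ∈ K := hC y (hLH hyL) hzK
        exact ⟨y, ⟨hyK, hyL⟩, rfl⟩
    refine ⟨inf_le_right, ?_, ?_⟩
    · rw [hmap]
      exact O.restrict _ hO (Subgroup.map_mono hLH)
    · intro x hxL hx
      rw [hmap] at hx
      exact ⟨hC x (hLH hxL) hx.1, hxL⟩
  comp := by
    rintro L K H ⟨hLK, hOL, hCL⟩ ⟨hKH, hOK, hCK⟩
    refine ⟨hLK.trans hKH, O.comp hOL hOK, ?_⟩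
    intro x hxH hx
    have hxK : x ∈ K := hCK x hxH (Subgroup.map_mono hLK hx)
    exact hCL x hxK hx

lemma inflSys_pre {G : Type*} [Group G] (N : Subgroup G) [N.Normal]
    (O : TransferSystem (G ⧸ N)) :
    ∀ A B : Subgroup G, preimageRel N O A B → (inflSys N O).rel A B := by
  rintro A B ⟨K₀, H₀, hO, rfl, rfl⟩
  have hs := QuotientGroup.mk'_surjective N
  refine ⟨Subgroup.comap_mono (O.le_of_rel hO), ?_, ?_⟩
  · rw [Subgroup.map_comap_eq_self_of_surjective hs,
      Subgroup.map_comap_eq_self_of_surjective hs]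
    exact hO
  · intro x _ hx
    rw [Subgroup.map_comap_eq_self_of_surjective hs] at hx
    exact hx

/-- characterization of the inflation `p*O`: for `K ≤ H`,
`K → H ∈ p*O` iff `p(K) → p(H) ∈ O` and `K = p⁻¹(p(K)) ∩ H`; equivalently,
`p*O` is the restriction closure of `p⁻¹O`. -/
theorem stmt_13 {G : Type*} [Group G] [Finite G] (N : Subgroup G) [N.Normal]
    (O : TransferSystem (G ⧸ N)) (P : TransferSystem G)
    (hP : P.IsGeneratedBy (preimageRel N O)) (K H : Subgroup G) (hKH : K ≤ H) :
    (P.rel K H ↔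
      O.rel (K.map (QuotientGroup.mk' N)) (H.map (QuotientGroup.mk' N)) ∧
        K = (K.map (QuotientGroup.mk' N)).comap (QuotientGroup.mk' N) ⊓ H) ∧
    (P.rel K H ↔
      ∃ A B : Subgroup G, preimageRel N O A B ∧ H ≤ B ∧ K = A ⊓ H) := by
  have key : ∀ K H : Subgroup G, P.rel K H → (inflSys N O).rel K H :=
    hP.2 (inflSys N O) (inflSys_pre N O)
  have back2 : (∃ A B : Subgroup G, preimageRel N O A B ∧ H ≤ B ∧ K = A ⊓ H) → P.rel K H := by
    rintro ⟨A, B, hpre, hHB, rfl⟩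
    exact P.restrict H (hP.1 A B hpre) hHB
  have fwd1 : P.rel K H →
      O.rel (K.map (QuotientGroup.mk' N)) (H.map (QuotientGroup.mk' N)) ∧
        K = (K.map (QuotientGroup.mk' N)).comap (QuotientGroup.mk' N) ⊓ H := by
    intro h
    obtain ⟨_, hO, hC⟩ := key K H h
    refine ⟨hO, le_antisymm (le_inf (Subgroup.le_comap_map (QuotientGroup.mk' N) _) hKH) ?_⟩
    rintro x ⟨hx1, hx2⟩
    exact hC x hx2 hx1
  have back1 : (O.rel (K.map (QuotientGroup.mk' N)) (H.map (QuotientGroup.mk' N)) ∧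
        K = (K.map (QuotientGroup.mk' N)).comap (QuotientGroup.mk' N) ⊓ H) → P.rel K H := by
    rintro ⟨hO, hK⟩
    exact back2 ⟨(K.map (QuotientGroup.mk' N)).comap (QuotientGroup.mk' N),
      (H.map (QuotientGroup.mk' N)).comap (QuotientGroup.mk' N),
      ⟨_, _, hO, rfl, rfl⟩, Subgroup.le_comap_map (QuotientGroup.mk' N) _, hK⟩
  refine ⟨⟨fwd1, back1⟩, ⟨fun h => ?_, back2⟩⟩
  obtain ⟨hO, hK⟩ := fwd1 h
  exact ⟨(K.map (QuotientGroup.mk' N)).comap (QuotientGroup.mk' N),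
    (H.map (QuotientGroup.mk' N)).comap (QuotientGroup.mk' N),
    ⟨_, _, hO, rfl, rfl⟩, Subgroup.le_comap_map (QuotientGroup.mk' N) _, hK⟩
end

section
/- Let G be a finite group, N a normal subgroup of G, p : G → G/N the quotient map, and O a transfer system on G/N. If O is disklike (as a transfer system on G/N), then the inflation p*O is a disklike transfer system on G. -/
section Aux

variable {G : Type*} [Group G]

lemma infl_map_inf (N : Subgroup G) [N.Normal] {K L H : Subgroup G}
    (hK : K ≤ H) (hL : L ≤ H) (hN : N ⊓ H ≤ K) :
    (K ⊓ L).map (QuotientGroup.mk' N)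
      = K.map (QuotientGroup.mk' N) ⊓ L.map (QuotientGroup.mk' N) := by
  refine le_antisymm (le_inf (Subgroup.map_mono inf_le_left)
    (Subgroup.map_mono inf_le_right)) ?_
  rintro x hx
  rw [Subgroup.mem_inf] at hx
  obtain ⟨⟨k, hk, hkx⟩, ⟨l, hl, hlx⟩⟩ := hx
  refine ⟨l, ⟨?_, hl⟩, hlx⟩
  have hkl : k⁻¹ * l ∈ N := by
    have : (QuotientGroup.mk' N) (k⁻¹ * l) = 1 := by
      rw [map_mul, map_inv, hkx, hlx]; group
    rwa [← QuotientGroup.ker_mk' N, MonoidHom.mem_ker]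
  have hklK : k⁻¹ * l ∈ K := hN ⟨hkl, H.mul_mem (H.inv_mem (hK hk)) (hL hl)⟩
  simpa using K.mul_mem hk hklK

lemma infl_map_conj (N : Subgroup G) [N.Normal] (g : G) (A : Subgroup G) :
    (A.map (MulAut.conj g).toMonoidHom).map (QuotientGroup.mk' N)
      = (A.map (QuotientGroup.mk' N)).map
          (MulAut.conj ((QuotientGroup.mk' N) g)).toMonoidHom := by
  rw [Subgroup.map_map, Subgroup.map_map]
  have : (QuotientGroup.mk' N).comp (MulAut.conj g).toMonoidHom
      = ((MulAut.conj ((QuotientGroup.mk' N) g)).toMonoidHom).comp (QuotientGroup.mk' N) := by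
    ext x; simp
  rw [this]

/-- The inflated transfer system: explicit description. -/
def inflatedTS (N : Subgroup G) [N.Normal] (O : TransferSystem (G ⧸ N)) :
    TransferSystem G where
  rel A B := A ≤ B ∧ N ⊓ B ≤ A ∧
    O.rel (A.map (QuotientGroup.mk' N)) (B.map (QuotientGroup.mk' N))
  le_of_rel h := h.1
  refl H := ⟨le_rfl, inf_le_right, O.refl _⟩
  conj := by
    rintro A B g ⟨hle, hN, hrel⟩
    refine ⟨Subgroup.map_mono hle, ?_, ?_⟩
    · rintro x hx
      rw [Subgroup.mem_inf] at hx
      obtain ⟨hxN, hxB⟩ := hx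
      obtain ⟨b, hb, rfl⟩ := hxB
      have hbN : b ∈ N := by
        have := (by assumption : N.Normal).conj_mem _ hxN g⁻¹
        simpa [mul_assoc] using this
      exact ⟨b, hN ⟨hbN, hb⟩, rfl⟩
    · rw [infl_map_conj, infl_map_conj]
      exact O.conj _ hrel
  restrict := by
    rintro A B L ⟨hle, hN, hrel⟩ hLB
    refine ⟨inf_le_right, le_inf ((inf_le_inf_left N hLB).trans hN) inf_le_right, ?_⟩
    rw [infl_map_inf N hle hLB hN]
    exact O.restrict _ hrel (Subgroup.map_mono hLB)
  comp := by
    rintro L K H ⟨h1, hN1, hr1⟩ ⟨h2, hN2, hr2⟩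
    exact ⟨h1.trans h2, (le_inf inf_le_left hN2).trans hN1, O.comp hr1 hr2⟩

lemma infl_contains (N : Subgroup G) [N.Normal] (O : TransferSystem (G ⧸ N)) :
    ∀ A B : Subgroup G, preimageRel N O A B → (inflatedTS N O).rel A B := by
  rintro A B ⟨K, H, hrel, rfl, rfl⟩
  have hN : ∀ J : Subgroup (G ⧸ N), N ≤ J.comap (QuotientGroup.mk' N) := by
    intro J x hx
    have : (QuotientGroup.mk' N) x = 1 := by
      rwa [← MonoidHom.mem_ker, QuotientGroup.ker_mk' N]
    simp only [Subgroup.mem_comap, this]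
    exact J.one_mem
  refine ⟨Subgroup.comap_mono (O.le_of_rel hrel), inf_le_left.trans (hN K), ?_⟩
  rw [Subgroup.map_comap_eq_self_of_surjective (QuotientGroup.mk'_surjective N),
    Subgroup.map_comap_eq_self_of_surjective (QuotientGroup.mk'_surjective N)]
  exact hrel

lemma infl_rel_of_P {G : Type*} [Group G] (N : Subgroup G) [N.Normal]
    (O : TransferSystem (G ⧸ N)) (P : TransferSystem G)
    (hP : P.IsGeneratedBy (preimageRel N O)) {A B : Subgroup G}
    (h : P.rel A B) : (inflatedTS N O).rel A B :=
  hP.2 (inflatedTS N O) (infl_contains N O) A B h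

end Aux

/-- inflation preserves being disklike. -/
theorem stmt_14 {G : Type*} [Group G] [Finite G] (N : Subgroup G) [N.Normal]
    (O : TransferSystem (G ⧸ N)) (P : TransferSystem G)
    (hP : P.IsGeneratedBy (preimageRel N O)) (hd : O.Disklike) :
    P.Disklike := by
  intro K H hKH
  obtain ⟨hle, hN, hrel⟩ := infl_rel_of_P N O P hP hKH
  obtain ⟨M, hM, hKM⟩ := hd _ _ hrel
  refine ⟨Subgroup.comap (QuotientGroup.mk' N) M, hP.1 _ _ ⟨M, ⊤, hM, rfl, ?_⟩, ?_⟩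
  · simp
  · apply le_antisymm
    · refine le_inf (fun x hx => ?_) hle
      have hx' : (QuotientGroup.mk' N) x ∈ K.map (QuotientGroup.mk' N) := ⟨x, hx, rfl⟩
      rw [hKM] at hx'
      exact hx'.1
    · rintro x hx
      rw [Subgroup.mem_inf] at hx
      obtain ⟨hxM, hxH⟩ := hx
      have hxK : (QuotientGroup.mk' N) x ∈ K.map (QuotientGroup.mk' N) := by
        rw [hKM]; exact ⟨hxM, ⟨x, hxH, rfl⟩⟩
      obtain ⟨k, hk, hkx⟩ := hxK
      have hkl : k⁻¹ * x ∈ N := by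
        have h1 : (QuotientGroup.mk' N) (k⁻¹ * x) = 1 := by
          rw [map_mul, map_inv, hkx]; group
        rwa [← QuotientGroup.ker_mk' N, MonoidHom.mem_ker]
      have hK : k⁻¹ * x ∈ K := hN ⟨hkl, H.mul_mem (H.inv_mem (hle hk)) hxH⟩
      simpa using K.mul_mem hk hK
end

section
/- Let G be a finite group, N a normal subgroup of G, p : G → G/N the quotient map, and O a transfer system on G/N. If O is saturated, then the inflation p*O is a saturated transfer system on G. -/
section Aux

open Subgroup

variable {G : Type*} [Group G]

private lemma conjN (N : Subgroup G) [N.Normal] (g : G) :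
    N.map (MulAut.conj g).toMonoidHom = N := by
  ext x
  simp only [Subgroup.mem_map, MulEquiv.coe_toMonoidHom, MulAut.conj_apply]
  constructor
  · rintro ⟨y, hy, rfl⟩
    exact ‹N.Normal›.conj_mem y hy g
  · intro hx
    exact ⟨g⁻¹ * x * g, by simpa using ‹N.Normal›.conj_mem x hx g⁻¹, by group⟩

private lemma map_inf_eq (N : Subgroup G) [N.Normal] {K H L : Subgroup G}
    (h2 : N ⊓ H ≤ K) (h1 : K ≤ H) (hL : L ≤ H) :
    (K ⊓ L).map (QuotientGroup.mk' N) =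
      K.map (QuotientGroup.mk' N) ⊓ L.map (QuotientGroup.mk' N) := by
  refine le_antisymm (le_inf (map_mono inf_le_left) (map_mono inf_le_right)) ?_
  rintro x ⟨⟨k, hk, hkx⟩, ⟨l, hl, hlx⟩⟩
  have hn : l * k⁻¹ ∈ N := by
    have h0 : QuotientGroup.mk' N (l * k⁻¹) = 1 := by
      rw [map_mul, map_inv, hlx, hkx]
      group
    rwa [QuotientGroup.mk'_apply, QuotientGroup.eq_one_iff] at h0
  have hlK : l ∈ K := by
    have : l * k⁻¹ ∈ N ⊓ H := ⟨hn, H.mul_mem (hL hl) (H.inv_mem (h1 hk))⟩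
    have := K.mul_mem (h2 this) hk
    simpa using this
  exact ⟨l, ⟨hlK, hl⟩, hlx⟩

/-- Explicit description of the inflated transfer system. -/
def inflQ (N : Subgroup G) [N.Normal] (O : TransferSystem (G ⧸ N)) :
    TransferSystem G where
  rel A B := A ≤ B ∧ N ⊓ B ≤ A ∧
    O.rel (A.map (QuotientGroup.mk' N)) (B.map (QuotientGroup.mk' N))
  le_of_rel h := h.1
  refl H := ⟨le_rfl, inf_le_right, O.refl _⟩
  conj := by
    rintro K H g ⟨h1, h2, h3⟩
    refine ⟨map_mono h1, ?_, ?_⟩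
    · calc N ⊓ H.map (MulAut.conj g).toMonoidHom
          = N.map (MulAut.conj g).toMonoidHom ⊓ H.map (MulAut.conj g).toMonoidHom := by
            rw [conjN N g]
        _ = (N ⊓ H).map (MulAut.conj g).toMonoidHom :=
            (map_inf N H _ (MulAut.conj g).injective).symm
        _ ≤ K.map (MulAut.conj g).toMonoidHom := map_mono h2
    · have hcomm : (QuotientGroup.mk' N).comp (MulAut.conj g).toMonoidHom =
          (MulAut.conj ((g : G ⧸ N))).toMonoidHom.comp (QuotientGroup.mk' N) := by
        ext x
        simp [MulAut.conj_apply]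
      have e : ∀ A : Subgroup G,
          (A.map (MulAut.conj g).toMonoidHom).map (QuotientGroup.mk' N) =
          (A.map (QuotientGroup.mk' N)).map (MulAut.conj ((g : G ⧸ N))).toMonoidHom := by
        intro A
        rw [Subgroup.map_map, Subgroup.map_map, hcomm]
      rw [e K, e H]
      exact O.conj _ h3
  restrict := by
    rintro K H L ⟨h1, h2, h3⟩ hL
    refine ⟨inf_le_right, le_inf (le_trans (inf_le_inf_left N hL) h2)
      inf_le_right, ?_⟩
    rw [map_inf_eq N h2 h1 hL]
    exact O.restrict _ h3 (map_mono hL)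
  comp := by
    rintro L K H ⟨h1, h2, h3⟩ ⟨h1', h2', h3'⟩
    exact ⟨h1.trans h1', le_trans (le_inf inf_le_left h2') h2, O.comp h3 h3'⟩

end Aux

/-- inflation preserves saturation. -/
theorem stmt_15 {G : Type*} [Group G] [Finite G] (N : Subgroup G) [N.Normal]
    (O : TransferSystem (G ⧸ N)) (P : TransferSystem G)
    (hP : P.IsGeneratedBy (preimageRel N O)) (hs : O.Saturated) :
    P.Saturated := by
  classical
  set p := QuotientGroup.mk' N with hp
  have hsurj : Function.Surjective p := QuotientGroup.mk'_surjective N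
  -- `preimageRel` is contained in the explicit system `inflQ`
  have hcont : ∀ A B : Subgroup G, preimageRel N O A B → (inflQ N O).rel A B := by
    rintro A B ⟨K, H, hKH, rfl, rfl⟩
    refine ⟨Subgroup.comap_mono (O.le_of_rel hKH), ?_, ?_⟩
    · intro x hx
      have : p x = 1 := by
        have : x ∈ N := hx.1
        simpa [hp, QuotientGroup.ker_mk'] using this
      simp [Subgroup.mem_comap, show (x : G ⧸ N) = 1 from this, K.one_mem]
    · rw [Subgroup.map_comap_eq_self_of_surjective hsurj,
        Subgroup.map_comap_eq_self_of_surjective hsurj]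
      exact hKH
  have hPQ : ∀ K H : Subgroup G, P.rel K H → (inflQ N O).rel K H :=
    hP.2 (inflQ N O) hcont
  -- conversely `inflQ` is contained in `P`
  have hQP : ∀ K H : Subgroup G, (inflQ N O).rel K H → P.rel K H := by
    rintro K H ⟨h1, h2, h3⟩
    have hpre : P.rel (Subgroup.comap p (K.map p)) (Subgroup.comap p (H.map p)) :=
      hP.1 _ _ ⟨K.map p, H.map p, h3, rfl, rfl⟩
    rw [Subgroup.comap_map_eq, Subgroup.comap_map_eq, QuotientGroup.ker_mk'] at hpre
    have hres : P.rel ((K ⊔ N) ⊓ H) H := P.restrict H hpre le_sup_left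
    have hKeq : (K ⊔ N) ⊓ H = K := by
      refine le_antisymm ?_ (le_inf le_sup_left h1)
      rintro x ⟨hxKN, hxH⟩
      have : (x : G) ∈ (↑(K ⊔ N) : Set G) := hxKN
      rw [Subgroup.mul_normal] at this
      obtain ⟨k, hk, n, hn, rfl⟩ := this
      have : n ∈ N ⊓ H := ⟨hn, by
        have := H.mul_mem (H.inv_mem (h1 hk)) hxH
        simpa using this⟩
      exact K.mul_mem hk (h2 this)
    rwa [hKeq] at hres
  intro L K H hLK hKH hLH
  obtain ⟨h1, h2, h3⟩ := hPQ L H hLH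
  exact hQP K H ⟨hKH, le_trans h2 hLK,
    hs _ _ _ (Subgroup.map_mono hLK) (Subgroup.map_mono hKH) h3⟩
end

section
/- Let G be a group, let A and B be subgroups of G, and let N be a normal subgroup of G. If (as subsets of G) the intersection of the set products A·B and A·N equals A, then (as subsets of G) the set product (A ∩ B)·N equals (A·N) ∩ (B·N). -/
open scoped Pointwise

/-- if `A·B ∩ A·N = A` as subsets of `G`, then
`(A ∩ B)·N = A·N ∩ B·N` as subsets of `G`. -/
theorem stmt_16 {G : Type*} [Group G] (A B N : Subgroup G) [N.Normal]
    (h : ((A : Set G) * (B : Set G)) ∩ ((A : Set G) * (N : Set G)) = (A : Set G)) :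
    ((A ⊓ B : Subgroup G) : Set G) * (N : Set G) =
      ((A : Set G) * (N : Set G)) ∩ ((B : Set G) * (N : Set G)) := by
  ext x
  constructor
  · rintro ⟨c, hc, n, hn, rfl⟩
    exact ⟨⟨c, hc.1, n, hn, rfl⟩, ⟨c, hc.2, n, hn, rfl⟩⟩
  · rintro ⟨⟨a, ha, n1, hn1, rfl⟩, b, hb, n2, hn2, heq⟩
    -- b = a * n1 * n2⁻¹ ∈ A·N, and b ∈ A·B, so b ∈ A
    have hbAN : b ∈ (A : Set G) * (N : Set G) := by
      refine ⟨a, ha, n1 * n2⁻¹, mul_mem hn1 (inv_mem hn2), ?_⟩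
      simp only at heq ⊢
      rw [← mul_assoc, ← heq]; group
    have hbAB : b ∈ (A : Set G) * (B : Set G) := ⟨1, one_mem A, b, hb, one_mul b⟩
    have hbA : b ∈ (A : Set G) := h ▸ ⟨hbAB, hbAN⟩
    exact ⟨b, ⟨hbA, hb⟩, n2, hn2, heq⟩
end

section
/- Let G be a finite group, N a normal subgroup of G, p : G → G/N the quotient map, and let O and O_m be transfer systems on G/N. If the pair (O, O_m) is compatible, then the pair of inflations (p*O, p*O_m) is a compatible pair of transfer systems on G. -/
section Infl

variable {G : Type*} [Group G] (N : Subgroup G) [N.Normal]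

local notation "p" => QuotientGroup.mk' N

lemma map_inf_comap' {G' : Type*} [Group G'] (f : G →* G') (B : Subgroup G)
    (S : Subgroup G') : (B ⊓ S.comap f).map f = B.map f ⊓ S := by
  ext x
  simp only [Subgroup.mem_map, Subgroup.mem_inf, Subgroup.mem_comap]
  constructor
  · rintro ⟨b, ⟨hb, hbS⟩, rfl⟩
    exact ⟨⟨b, hb, rfl⟩, hbS⟩
  · rintro ⟨⟨b, hb, rfl⟩, hS⟩
    exact ⟨b, ⟨hb, hS⟩, rfl⟩

lemma comap_map_conj (g : G) (S : Subgroup (G ⧸ N)) :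
    (S.map (MulAut.conj ((p) g)).toMonoidHom).comap (p) =
      (S.comap (p)).map (MulAut.conj g).toMonoidHom := by
  ext x
  simp only [Subgroup.mem_comap, Subgroup.mem_map, MulEquiv.coe_toMonoidHom,
    MulAut.conj_apply, map_mul, map_inv]
  constructor
  · rintro ⟨s, hs, h⟩
    refine ⟨g⁻¹ * x * g, ?_, by group⟩
    have hxs : (p) (g⁻¹ * x * g) = s := by
      have := congrArg (fun t => ((p) g)⁻¹ * t * (p) g) h
      simpa [map_mul, map_inv, mul_assoc] using this.symm
    rwa [hxs]
  · rintro ⟨y, hy, rfl⟩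
    exact ⟨(p) y, hy, by simp [map_mul, map_inv]⟩

lemma map_p_conj (g : G) (A : Subgroup G) :
    (A.map (MulAut.conj g).toMonoidHom).map (p) =
      (A.map (p)).map (MulAut.conj ((p) g)).toMonoidHom := by
  rw [Subgroup.map_map, Subgroup.map_map]
  have h : ((p) : G →* G ⧸ N).comp (MulAut.conj g).toMonoidHom =
      ((MulAut.conj ((p) g)).toMonoidHom).comp (p) := by
    ext x
    simp [MulAut.conj_apply]
  rw [h]

/-- The explicit description of the inflation of `O`. -/
def inflRel (O : TransferSystem (G ⧸ N)) : Subgroup G → Subgroup G → Prop :=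
  fun A B => A ≤ B ∧ O.rel (A.map (p)) (B.map (p)) ∧ A = B ⊓ (A.map (p)).comap (p)

/-- `inflRel` is a transfer system. -/
def inflTS (O : TransferSystem (G ⧸ N)) : TransferSystem G where
  rel := inflRel N O
  le_of_rel h := h.1
  refl H := ⟨le_rfl, O.refl _, (inf_eq_left.mpr (Subgroup.le_comap_map _ _)).symm⟩
  conj := by
    rintro K H g ⟨h1, h2, h3⟩
    refine ⟨Subgroup.map_mono h1, ?_, ?_⟩
    · rw [map_p_conj, map_p_conj]
      exact O.conj _ h2
    · rw [map_p_conj, comap_map_conj]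
      have hinj : Function.Injective (MulAut.conj g).toMonoidHom :=
        (MulAut.conj g).injective
      rw [← Subgroup.map_inf _ _ _ hinj, ← h3]
  restrict := by
    rintro K H L ⟨h1, h2, h3⟩ hL
    have hKL : K ⊓ L = L ⊓ (K.map (p)).comap (p) := by
      conv_lhs => rw [h3]
      rw [inf_comm (H ⊓ _) L, ← inf_assoc, inf_eq_left.mpr hL]
    have hmap : (K ⊓ L).map (p) = L.map (p) ⊓ K.map (p) := by
      rw [hKL, map_inf_comap']
    refine ⟨inf_le_right, ?_, ?_⟩
    · rw [hmap, inf_comm]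
      exact O.restrict _ h2 (Subgroup.map_mono hL)
    · calc K ⊓ L = L ⊓ (K.map (p)).comap (p) := hKL
        _ = L ⊓ ((K ⊓ L).map (p)).comap (p) := by
          rw [hmap, Subgroup.comap_inf, ← inf_assoc,
            inf_eq_left.mpr (Subgroup.le_comap_map (p) L)]
  comp := by
    rintro L K H ⟨h1, h2, h3⟩ ⟨h4, h5, h6⟩
    have hLK : (L.map (p)).comap (p) ≤ (K.map (p)).comap (p) :=
      Subgroup.comap_mono (Subgroup.map_mono h1)
    refine ⟨h1.trans h4, O.comp h2 h5, ?_⟩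
    calc L = K ⊓ (L.map (p)).comap (p) := h3
      _ = (H ⊓ (K.map (p)).comap (p)) ⊓ (L.map (p)).comap (p) := by rw [← h6]
      _ = H ⊓ (L.map (p)).comap (p) := by rw [inf_assoc, inf_eq_right.mpr hLK]

/-- The generated transfer system coincides with `inflRel`. -/
lemma isGeneratedBy_iff_inflRel (O : TransferSystem (G ⧸ N)) (PO : TransferSystem G)
    (hPO : PO.IsGeneratedBy (preimageRel N O)) (A B : Subgroup G) :
    PO.rel A B ↔ inflRel N O A B := by
  constructor
  · intro h
    refine hPO.2 (inflTS N O) ?_ A B h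
    rintro A' B' ⟨K, H, hKH, rfl, rfl⟩
    have hs : Function.Surjective (p) := QuotientGroup.mk'_surjective N
    refine ⟨Subgroup.comap_mono (O.le_of_rel hKH), ?_, ?_⟩
    · rw [Subgroup.map_comap_eq_self_of_surjective hs,
        Subgroup.map_comap_eq_self_of_surjective hs]
      exact hKH
    · rw [Subgroup.map_comap_eq_self_of_surjective hs, ← Subgroup.comap_inf,
        inf_eq_right.mpr (O.le_of_rel hKH)]
  · rintro ⟨h1, h2, h3⟩
    have base : PO.rel ((A.map (p)).comap (p)) ((B.map (p)).comap (p)) :=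
      hPO.1 _ _ ⟨A.map (p), B.map (p), h2, rfl, rfl⟩
    have hB : B ≤ (B.map (p)).comap (p) := Subgroup.le_comap_map _ _
    have hres := PO.restrict B base hB
    rwa [inf_comm, ← h3] at hres

end Infl

/-- inflation preserves compatibility. -/
theorem stmt_19 {G : Type*} [Group G] [Finite G] (N : Subgroup G) [N.Normal]
    (O Om : TransferSystem (G ⧸ N)) (PO POm : TransferSystem G)
    (hPO : PO.IsGeneratedBy (preimageRel N O)) (hPOm : POm.IsGeneratedBy (preimageRel N Om))
    (hc : O.Compatible Om) :
    PO.Compatible POm := by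
  have hO := isGeneratedBy_iff_inflRel N O PO hPO
  have hOm := isGeneratedBy_iff_inflRel N Om POm hPOm
  set p := QuotientGroup.mk' N with hp
  constructor
  · intro K H h
    rw [hOm] at h
    rw [hO]
    exact ⟨h.1, hc.1 _ _ h.2.1, h.2.2⟩
  · intro K J H hJH hm ha
    rw [hOm] at hm
    rw [hO] at ha ⊢
    obtain ⟨hKH, hm2, hm3⟩ := hm
    obtain ⟨-, ha2, ha3⟩ := ha
    have hKJ : K ⊓ J = J ⊓ (K.map p).comap p := by
      conv_lhs => rw [hm3]
      rw [inf_comm (H ⊓ _) J, ← inf_assoc, inf_eq_left.mpr hJH]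
    have hmapKJ : (K ⊓ J).map p = J.map p ⊓ K.map p := by
      rw [hKJ, map_inf_comap']
    have hOJH : O.rel (J.map p) (H.map p) := by
      refine hc.2 (K.map p) (J.map p) (H.map p) (Subgroup.map_mono hJH) hm2 ?_
      rw [inf_comm, ← hmapKJ]
      exact ha2
    refine ⟨hJH, hOJH, le_antisymm (le_inf hJH (Subgroup.le_comap_map _ _)) ?_⟩
    rintro x ⟨hxH, hxJ⟩
    obtain ⟨j, hj, hpj⟩ := Subgroup.mem_map.1 hxJ
    set n := j⁻¹ * x with hn
    have hpn : p n = 1 := by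
      rw [hn, map_mul, map_inv, hpj]
      simp [hp]
    have hn1 : n ∈ (K.map p).comap p := by
      simp only [Subgroup.mem_comap, hpn]
      exact Subgroup.one_mem _
    have hn2 : n ∈ ((K ⊓ J).map p).comap p := by
      simp only [Subgroup.mem_comap, hpn]
      exact Subgroup.one_mem _
    have hnK : n ∈ K := by
      rw [hm3]
      exact ⟨H.mul_mem (H.inv_mem (hJH hj)) hxH, hn1⟩
    have hnKJ : n ∈ K ⊓ J := by
      rw [ha3]
      exact ⟨hnK, hn2⟩
    have hx : x = j * n := by rw [hn]; group
    rw [hx]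
    exact J.mul_mem hj hnKJ.2
end
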